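/- At every grid point x, the Hessian of Q is diagonal with entries [∇²Q(x)]_{(φ'r'),(φr)} = -δ_{rr'} δ_{φφ'} (1 + 4 x_{φr}²); in particular the Hessian at a grid point is negative definite, with diagonal entries equal to -5 where x_{φr} = 1 and -1 where x_{φr} = 0. -/

import Mathlib

open scoped BigOperators

noncomputable def Q (F R : ℕ) (y : EuclideanSpace ℝ (Fin F × Fin R)) : ℝ :=
  -(1/2) * ∑ r : Fin R,
    ((∑ φ : Fin F, (y (φ, r))^2 - 1)^2 + ∑ φ : Fin F, (y (φ, r))^2 * (1 - y (φ, r))^2)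

def IsGridPoint (F R : ℕ) (x : EuclideanSpace ℝ (Fin F × Fin R)) : Prop :=
  ∀ r : Fin R, ∃! φ : Fin F, x (φ, r) = 1 ∧ ∀ φ' : Fin F, φ' ≠ φ → x (φ', r) = 0

/-- The Hessian of `Q` at `x`, as a bilinear form evaluated on a pair of vectors. -/
noncomputable def hess (F R : ℕ) (x v w : EuclideanSpace ℝ (Fin F × Fin R)) : ℝ :=
  iteratedFDeriv ℝ 2 (Q F R) x ![v, w]

namespace QAux

variable (F R : ℕ)

abbrev E (F R : ℕ) := EuclideanSpace ℝ (Fin F × Fin R)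

noncomputable def pr (p : Fin F × Fin R) : E F R →L[ℝ] ℝ := EuclideanSpace.proj p

@[simp] lemma pr_apply (p : Fin F × Fin R) (y : E F R) : pr F R p y = y p := rfl

lemma hasFDerivAt_sq {x : E F R} {f : E F R → ℝ} {f' : E F R →L[ℝ] ℝ}
    (h : HasFDerivAt f f' x) :
    HasFDerivAt (fun y => (f y)^2) ((2 * f x) • f') x := by
  have h2 := h.mul h
  have he : (2 * f x) • f' = f x • f' + f x • f' := by rw [two_mul, add_smul]
  rw [he]
  have h3 : HasFDerivAt (fun y => f y * f y) (f x • f' + f x • f') x := h2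
  simpa only [pow_two] using h3

/-- column sum of squares -/
noncomputable def S (r : Fin R) (y : E F R) : ℝ := ∑ φ : Fin F, (y (φ, r))^2

noncomputable def Sd (r : Fin R) (y : E F R) : E F R →L[ℝ] ℝ :=
  ∑ φ : Fin F, (2 * y (φ, r)) • pr F R (φ, r)

lemma Sd_apply (r : Fin R) (y v : E F R) :
    Sd F R r y v = ∑ φ : Fin F, 2 * y (φ, r) * v (φ, r) := by
  simp [Sd, ContinuousLinearMap.sum_apply]

lemma hasFDerivAt_S (r : Fin R) (y : E F R) :
    HasFDerivAt (S F R r) (Sd F R r y) y :=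
  HasFDerivAt.fun_sum (fun φ _ => hasFDerivAt_sq F R ((pr F R (φ, r)).hasFDerivAt))

/-- coefficient of the first derivative -/
noncomputable def c (p : Fin F × Fin R) (y : E F R) : ℝ :=
  -(2 * ((S F R p.2 y - 1) * y p)) - y p * (1 - y p)^2 + (y p)^2 * (1 - y p)

noncomputable def cd (p : Fin F × Fin R) (y : E F R) : E F R →L[ℝ] ℝ :=
  (-(2 * y p)) • Sd F R p.2 y +
    (-(2 * (S F R p.2 y - 1)) - (1 - y p)^2 + 4 * (y p * (1 - y p)) - (y p)^2) • pr F R p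

lemma hasFDerivAt_c (p : Fin F × Fin R) (y : E F R) :
    HasFDerivAt (fun y => c F R p y) (cd F R p y) y := by
  have hp : HasFDerivAt (fun y : E F R => y p) (pr F R p) y := (pr F R p).hasFDerivAt
  have hS := hasFDerivAt_S F R p.2 y
  have h1 := (hS.sub_const 1).mul hp
  have hq2 := hasFDerivAt_sq F R ((hasFDerivAt_const (1:ℝ) y).sub hp)
  have h2 := hp.mul hq2
  have h3 := (hasFDerivAt_sq F R hp).mul ((hasFDerivAt_const (1:ℝ) y).sub hp)
  have h := ((h1.const_mul 2).neg.sub h2).add h3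
  exact h.congr_fderiv (by ext v; simp [cd, Sd_apply]; ring)

noncomputable def D1 (y : E F R) : E F R →L[ℝ] ℝ :=
  ∑ p : Fin F × Fin R, (c F R p y) • pr F R p

lemma hasFDerivAt_Q (y : E F R) : HasFDerivAt (Q F R) (D1 F R y) y := by
  have hA : ∀ r : Fin R, HasFDerivAt (fun y : E F R => (S F R r y - 1)^2)
      ((2 * (S F R r y - 1)) • Sd F R r y) y := fun r =>
    hasFDerivAt_sq F R ((hasFDerivAt_S F R r y).sub_const 1)
  have hB : ∀ r : Fin R, ∀ φ : Fin F,
      HasFDerivAt (fun y : E F R => (y (φ, r))^2 * (1 - y (φ, r))^2)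
      (((y (φ, r))^2) • ((2 * (1 - y (φ, r))) • (0 - pr F R (φ, r))) +
        ((1 - y (φ, r))^2) • ((2 * y (φ, r)) • pr F R (φ, r))) y := by
    intro r φ
    have hp : HasFDerivAt (fun y : E F R => y (φ, r)) (pr F R (φ, r)) y :=
      (pr F R (φ, r)).hasFDerivAt
    have h2 := hasFDerivAt_sq F R hp
    have hq2 := hasFDerivAt_sq F R ((hasFDerivAt_const (1:ℝ) y).sub hp)
    exact h2.mul hq2
  have h : HasFDerivAt (Q F R)
      ((-(1/2) : ℝ) • ∑ r : Fin R, ((2 * (S F R r y - 1)) • Sd F R r y +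
        ∑ φ : Fin F, (((y (φ, r))^2) • ((2 * (1 - y (φ, r))) • (0 - pr F R (φ, r))) +
          ((1 - y (φ, r))^2) • ((2 * y (φ, r)) • pr F R (φ, r))))) y := by
    have hsum := HasFDerivAt.fun_sum (fun r (_ : r ∈ Finset.univ) =>
      (hA r).add (HasFDerivAt.fun_sum (fun φ (_ : φ ∈ Finset.univ) => hB r φ)))
    exact hsum.const_mul (-(1/2) : ℝ)
  refine h.congr_fderiv ?_
  ext v
  simp only [ContinuousLinearMap.smul_apply, D1, ContinuousLinearMap.sum_apply,
    ContinuousLinearMap.add_apply, ContinuousLinearMap.sub_apply,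
    ContinuousLinearMap.zero_apply, pr_apply, Sd_apply, smul_eq_mul]
  rw [Fintype.sum_prod_type_right, Finset.mul_sum]
  refine Finset.sum_congr rfl (fun r _ => ?_)
  rw [mul_add, Finset.mul_sum, Finset.mul_sum, Finset.mul_sum, ← Finset.sum_add_distrib]
  refine Finset.sum_congr rfl (fun φ _ => ?_)
  simp [c]
  ring

noncomputable def B2 (x : E F R) : E F R →L[ℝ] E F R →L[ℝ] ℝ :=
  ∑ p : Fin F × Fin R, (cd F R p x).smulRight (pr F R p)

lemma hasFDerivAt_D1 (x : E F R) : HasFDerivAt (D1 F R) (B2 F R x) x := by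
  refine HasFDerivAt.fun_sum (fun p _ => ?_)
  exact (hasFDerivAt_c F R p x).smul_const (pr F R p)

lemma hess_eq (x v w : E F R) :
    hess F R x v w = ∑ p : Fin F × Fin R, cd F R p x v * w p := by
  have hfd : (fderiv ℝ (Q F R)) = D1 F R := funext fun y => (hasFDerivAt_Q F R y).fderiv
  have h2 : fderiv ℝ (fderiv ℝ (Q F R)) x = B2 F R x := by
    rw [hfd]; exact (hasFDerivAt_D1 F R x).fderiv
  unfold hess
  rw [iteratedFDeriv_two_apply, h2]
  simp [B2, ContinuousLinearMap.sum_apply]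

end QAux

open QAux

theorem stmt_6 (F R : ℕ) (hF : 0 < F) (hR : 0 < R)
    (x : EuclideanSpace ℝ (Fin F × Fin R)) (hx : IsGridPoint F R x) :
    (∀ p p' : Fin F × Fin R,
      hess F R x (EuclideanSpace.single p' 1) (EuclideanSpace.single p 1) =
        (if p' = p then -(1 + 4 * (x p)^2) else 0)) ∧
    (∀ v : EuclideanSpace ℝ (Fin F × Fin R), v ≠ 0 → hess F R x v v < 0) ∧
    (∀ p : Fin F × Fin R, x p = 1 →
      hess F R x (EuclideanSpace.single p 1) (EuclideanSpace.single p 1) = -5) ∧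
    (∀ p : Fin F × Fin R, x p = 0 →
      hess F R x (EuclideanSpace.single p 1) (EuclideanSpace.single p 1) = -1) := by
  -- extract grid-point data
  choose φ0 hφ0 using fun r => (hx r).exists
  have h1 : ∀ r, x (φ0 r, r) = 1 := fun r => (hφ0 r).1
  have h0 : ∀ r (φ' : Fin F), φ' ≠ φ0 r → x (φ', r) = 0 := fun r => (hφ0 r).2
  have hS1 : ∀ r : Fin R, S F R r x = 1 := by
    intro r
    unfold S
    rw [Finset.sum_eq_single (φ0 r)]
    · rw [h1 r]; norm_num
    · intro b _ hb; rw [h0 r b hb]; ring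
    · intro h; exact absurd (Finset.mem_univ _) h
  have hbool : ∀ p : Fin F × Fin R, x p = 0 ∨ x p = 1 := by
    intro p
    by_cases h : p.1 = φ0 p.2
    · right; rw [← h1 p.2, ← h]
    · left; rw [← h0 p.2 p.1 h]
  have hsumxv : ∀ (r : Fin R) (v : EuclideanSpace ℝ (Fin F × Fin R)),
      ∑ ψ : Fin F, 2 * x (ψ, r) * v (ψ, r) = 2 * v (φ0 r, r) := by
    intro r v
    rw [Finset.sum_eq_single (φ0 r)]
    · rw [h1 r]; ring
    · intro b _ hb; rw [h0 r b hb]; ring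
    · intro h; exact absurd (Finset.mem_univ _) h
  have hcross : ∀ (p : Fin F × Fin R) (v : EuclideanSpace ℝ (Fin F × Fin R)),
      x p * v (φ0 p.2, p.2) = x p * v p := by
    intro p v
    rcases hbool p with h | h
    · rw [h]; ring
    · have hp1 : p.1 = φ0 p.2 := by
        by_contra hne
        have := h0 p.2 p.1 hne
        rw [show ((p.1, p.2) : Fin F × Fin R) = p from rfl] at this
        rw [h] at this; norm_num at this
      rw [show p = (φ0 p.2, p.2) from Prod.ext hp1 rfl]
  -- key formula
  have key : ∀ v w : EuclideanSpace ℝ (Fin F × Fin R),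
      hess F R x v w = ∑ p : Fin F × Fin R, -((1 + 4 * (x p)^2) * (v p * w p)) := by
    intro v w
    rw [hess_eq]
    refine Finset.sum_congr rfl (fun p _ => ?_)
    simp only [cd, ContinuousLinearMap.add_apply, ContinuousLinearMap.smul_apply,
      pr_apply, Sd_apply, smul_eq_mul, hS1 p.2, hsumxv p.2 v]
    have hc := hcross p v
    rcases hbool p with h | h
    · rw [h]; ring
    · rw [h] at hc
      have hv' : v (φ0 p.2, p.2) = v p := by linarith
      rw [h, hv']; ring
  refine ⟨?_, ?_, ?_, ?_⟩
  · intro p p'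
    rw [key]
    rw [Finset.sum_eq_single p]
    · by_cases h : p' = p
      · simp [h, EuclideanSpace.single_apply]
      · have hne : p ≠ p' := fun e => h e.symm
        simp [EuclideanSpace.single_apply, h, hne]
    · intro q _ hq
      simp [EuclideanSpace.single_apply, hq]
    · intro h; exact absurd (Finset.mem_univ _) h
  · intro v hv
    rw [key]
    have hex : ∃ p, v p ≠ 0 := by
      by_contra h
      push_neg at h
      exact hv (PiLp.ext h)
    obtain ⟨p0, hp0⟩ := hex
    have hpos : 0 < ∑ p : Fin F × Fin R, (1 + 4 * (x p)^2) * (v p * v p) := by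
      refine Finset.sum_pos' (fun p _ => ?_) ⟨p0, Finset.mem_univ _, ?_⟩
      · have h2 : (0:ℝ) ≤ v p * v p := mul_self_nonneg _
        positivity
      · have ha : (0:ℝ) < 1 + 4 * (x p0)^2 := by positivity
        have hb : (0:ℝ) < v p0 * v p0 := mul_self_pos.mpr hp0
        exact mul_pos ha hb
    have hneg : ∑ p : Fin F × Fin R, -((1 + 4 * (x p)^2) * (v p * v p)) =
        -∑ p : Fin F × Fin R, (1 + 4 * (x p)^2) * (v p * v p) := by
      rw [Finset.sum_neg_distrib]
    rw [hneg]
    linarith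
  · intro p hp
    rw [key, Finset.sum_eq_single p]
    · simp [EuclideanSpace.single_apply, hp]; ring
    · intro q _ hq
      simp [EuclideanSpace.single_apply, hq]
    · intro h; exact absurd (Finset.mem_univ _) h
  · intro p hp
    rw [key, Finset.sum_eq_single p]
    · simp [EuclideanSpace.single_apply, hp]
    · intro q _ hq
      simp [EuclideanSpace.single_apply, hq]
    · intro h; exact absurd (Finset.mem_univ _) h
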